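/- Every neighborhood pattern of finite size at least 2 whose edges, with directions ignored, form a simple path with at least one edge having the pivot as one endpoint, and which carries exactly one vertex label placed on a vertex other than the non-pivot endpoint of the path, is decomposable; indeed, removing the vertex label yields a connected pivoted graph, and removing the labeled edge incident to the non-pivot endpoint also yields a connected pivoted graph. -/
import Mathlib


/-- A labeled graph over vertex-label alphabet `SV` and edge-label alphabet `SE`:
a vertex set, a set of vertex labels, and a set of labeled edges with no loops. -/
structure LabeledGraph (V SV SE : Type*) where
  verts : Set V
  labels : Set (V × SV)
  edges : Set (V × V × SE)
  labels_sub : ∀ ⦃p : V × SV⦄, p ∈ labels → p.1 ∈ verts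
  edges_sub : ∀ ⦃q : V × V × SE⦄, q ∈ edges → q.1 ∈ verts ∧ q.2.1 ∈ verts
  no_loops : ∀ ⦃q : V × V × SE⦄, q ∈ edges → q.1 ≠ q.2.1

/-- An element of a labeled graph: a vertex label or a labeled edge. -/
abbrev GraphElement (V SV SE : Type*) := (V × SV) ⊕ (V × V × SE)

namespace LabeledGraph

variable {V SV SE : Type*}

/-- Adjacency, ignoring edge directions. -/
def Adj (G : LabeledGraph V SV SE) (x y : V) : Prop :=
  ∃ l, (x, y, l) ∈ G.edges ∨ (y, x, l) ∈ G.edges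

/-- The size of a labeled graph: number of vertex labels plus number of labeled edges. -/
noncomputable def size (G : LabeledGraph V SV SE) : ℕ := G.labels.ncard + G.edges.ncard

/-- Membership of an element in a labeled graph. -/
def HasElement (G : LabeledGraph V SV SE) : GraphElement V SV SE → Prop
  | Sum.inl p => p ∈ G.labels
  | Sum.inr q => q ∈ G.edges

/-- A vertex is occupied (not isolated) w.r.t. given label and edge sets if it
carries some vertex label or is incident to some labeled edge. -/
def Occupied (labels : Set (V × SV)) (edges : Set (V × V × SE)) (x : V) : Prop :=
  (∃ l, (x, l) ∈ labels) ∨ (∃ u l, (x, u, l) ∈ edges ∨ (u, x, l) ∈ edges)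

/-- The vertex labels remaining after deleting an element. -/
def delLabels (G : LabeledGraph V SV SE) : GraphElement V SV SE → Set (V × SV)
  | Sum.inl p => G.labels \ {p}
  | Sum.inr _ => G.labels

/-- The labeled edges remaining after deleting an element. -/
def delEdges (G : LabeledGraph V SV SE) : GraphElement V SV SE → Set (V × V × SE)
  | Sum.inl _ => G.edges
  | Sum.inr q => G.edges \ {q}

lemma delLabels_subset (G : LabeledGraph V SV SE) (e : GraphElement V SV SE) :
    G.delLabels e ⊆ G.labels := by
  cases e with
  | inl p => exact Set.diff_subset
  | inr q => exact subset_rfl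

lemma delEdges_subset (G : LabeledGraph V SV SE) (e : GraphElement V SV SE) :
    G.delEdges e ⊆ G.edges := by
  cases e with
  | inl p => exact subset_rfl
  | inr q => exact Set.diff_subset

/-- Removing an element from a labeled graph: delete that vertex label or labeled
edge, and additionally delete any vertex thereby left isolated. -/
def removeElement (G : LabeledGraph V SV SE) (e : GraphElement V SV SE) :
    LabeledGraph V SV SE where
  verts := {x ∈ G.verts |
    Occupied (G.delLabels e) (G.delEdges e) x ∨ ¬ Occupied G.labels G.edges x}
  labels := G.delLabels e
  edges := G.delEdges e
  labels_sub := fun p hp =>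
    ⟨G.labels_sub (G.delLabels_subset e hp), Or.inl (Or.inl ⟨p.2, hp⟩)⟩
  edges_sub := fun q hq =>
    ⟨⟨(G.edges_sub (G.delEdges_subset e hq)).1,
        Or.inl (Or.inr ⟨q.2.1, q.2.2, Or.inl hq⟩)⟩,
      ⟨(G.edges_sub (G.delEdges_subset e hq)).2,
        Or.inl (Or.inr ⟨q.1, q.2.2, Or.inr hq⟩)⟩⟩
  no_loops := fun q hq => G.no_loops (G.delEdges_subset e hq)

/-- Connectivity of a (non-pivoted) labeled graph: every pair of its vertices is
joined by a path of edges, ignoring edge directions. -/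
def ConnectedGraph (G : LabeledGraph V SV SE) : Prop :=
  ∀ x ∈ G.verts, ∀ y ∈ G.verts, Relation.ReflTransGen G.Adj x y

/-- A leaf vertex: incident to exactly one labeled edge. -/
def IsLeafVertex (G : LabeledGraph V SV SE) (x : V) : Prop :=
  ∃! q : V × V × SE, q ∈ G.edges ∧ (q.1 = x ∨ q.2.1 = x)

/-- A cycle in the underlying undirected multigraph: a closed walk
`ws` using pairwise distinct labeled edges `es`. -/
def IsCycle (G : LabeledGraph V SV SE) (es : List (V × V × SE)) (ws : List V) : Prop :=
  es ≠ [] ∧ es.Nodup ∧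
  ws.length = es.length + 1 ∧ ws.head? = ws.getLast? ∧
  ∀ i q, es[i]? = some q → q ∈ G.edges ∧
    ∃ u w, ws[i]? = some u ∧ ws[i+1]? = some w ∧
      ((q.1 = u ∧ q.2.1 = w) ∨ (q.1 = w ∧ q.2.1 = u))

end LabeledGraph

/-- A pivoted graph: a labeled graph with a distinguished vertex, the pivot. -/
structure PivotedGraph (V SV SE : Type*) extends LabeledGraph V SV SE where
  pivot : V
  pivot_mem : pivot ∈ verts

/-- Pivoted subgraph isomorphism `P₁ ⊆_f P₂`: an injective map on vertices preserving
vertex labels and labeled edges and sending pivot to pivot. -/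
def PSubIso {V₁ V₂ SV SE : Type*}
    (P₁ : PivotedGraph V₁ SV SE) (P₂ : PivotedGraph V₂ SV SE) : Prop :=
  ∃ f : V₁ → V₂,
    Set.MapsTo f P₁.verts P₂.verts ∧
    Set.InjOn f P₁.verts ∧
    (∀ ⦃x : V₁⦄ ⦃l : SV⦄, (x, l) ∈ P₁.labels → (f x, l) ∈ P₂.labels) ∧
    (∀ ⦃x y : V₁⦄ ⦃l : SE⦄, (x, y, l) ∈ P₁.edges → (f x, f y, l) ∈ P₂.edges) ∧
    f P₁.pivot = P₂.pivot

/-- The match set `M_G(P)`: all vertices `v` of `G` such that `P ⊆_f ⟨G, v⟩`. -/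
def matchSet {V V' SV SE : Type*} (G : LabeledGraph V SV SE)
    (P : PivotedGraph V' SV SE) : Set V :=
  {x | ∃ hx : x ∈ G.verts, PSubIso P ⟨G, x, hx⟩}

namespace PivotedGraph

variable {V SV SE : Type*}

/-- A pivoted graph is connected if every vertex is joined to the pivot by a path
of edges, ignoring edge directions. (A neighborhood pattern is a connected
pivoted graph.) -/
def Connected (P : PivotedGraph V SV SE) : Prop :=
  ∀ x ∈ P.verts, Relation.ReflTransGen P.toLabeledGraph.Adj x P.pivot

/-- Removing the element `e` from `P` yields a connected pivoted graph (with the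
same pivot). -/
def ConnectedAfterRemove (P : PivotedGraph V SV SE) (e : GraphElement V SV SE) : Prop :=
  P.pivot ∈ (P.toLabeledGraph.removeElement e).verts ∧
  ∀ x ∈ (P.toLabeledGraph.removeElement e).verts,
    Relation.ReflTransGen (P.toLabeledGraph.removeElement e).Adj x P.pivot

/-- A neighborhood pattern is decomposable if it has two distinct elements such that
removing either one yields a connected pivoted graph. -/
def Decomposable (P : PivotedGraph V SV SE) : Prop :=
  ∃ e₁ e₂ : GraphElement V SV SE, e₁ ≠ e₂ ∧
    P.toLabeledGraph.HasElement e₁ ∧ P.toLabeledGraph.HasElement e₂ ∧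
    P.ConnectedAfterRemove e₁ ∧ P.ConnectedAfterRemove e₂

/-- A path pattern: the edges, with directions ignored, form a simple path (given by
the list of vertices `vs`) having the pivot as one endpoint, with at most one vertex
label, which (if present) is on the other endpoint of the path. -/
def IsPathPattern (P : PivotedGraph V SV SE) : Prop :=
  ∃ vs : List V,
    vs ≠ [] ∧ vs.Nodup ∧ vs.head? = some P.pivot ∧
    P.verts = {x | x ∈ vs} ∧
    (∀ q ∈ P.edges, ∃ i u w, vs[i]? = some u ∧ vs[i + 1]? = some w ∧
      ((q.1 = u ∧ q.2.1 = w) ∨ (q.1 = w ∧ q.2.1 = u))) ∧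
    (∀ i u w, vs[i]? = some u → vs[i + 1]? = some w →
      ∃! q : V × V × SE, q ∈ P.edges ∧
        ((q.1 = u ∧ q.2.1 = w) ∨ (q.1 = w ∧ q.2.1 = u))) ∧
    P.labels.Subsingleton ∧
    (∀ p ∈ P.labels, vs.getLast? = some p.1)

end PivotedGraph

/-- An injective match of a labeled graph pattern `P` in a labeled graph `G`:
an injective map from the vertices of `P` to those of `G` carrying vertex labels
to vertex labels and labeled edges to labeled edges. -/
def MatchOn {V V' SV SE : Type*} (P : LabeledGraph V' SV SE) (G : LabeledGraph V SV SE)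
    (f : P.verts → V) : Prop :=
  (∀ x, f x ∈ G.verts) ∧ Function.Injective f ∧
  (∀ ⦃p : V' × SV⦄ (hp : p ∈ P.labels), (f ⟨p.1, P.labels_sub hp⟩, p.2) ∈ G.labels) ∧
  (∀ ⦃q : V' × V' × SE⦄ (hq : q ∈ P.edges),
    (f ⟨q.1, (P.edges_sub hq).1⟩, f ⟨q.2.1, (P.edges_sub hq).2⟩, q.2.2) ∈ G.edges)

/-- Every neighborhood pattern of finite size at least 2 whose edges, with
directions ignored, form a simple path (vertex list `vs`, with at least one edge) having
the pivot as one endpoint, and which carries exactly one vertex label `lab` placed on a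
vertex other than the non-pivot endpoint `lastv` of the path, is decomposable; indeed,
removing the vertex label yields a connected pivoted graph, and removing the labeled
edge incident to the non-pivot endpoint also yields a connected pivoted graph. -/
theorem decomposable_of_mislabeled_path {V SV SE : Type*}
    (P : PivotedGraph V SV SE) (hconn : P.Connected)
    (vs : List V) (lastv : V) (lab : V × SV)
    (hnd : vs.Nodup) (hlen : 2 ≤ vs.length)
    (hhead : vs.head? = some P.pivot) (hlast : vs.getLast? = some lastv)
    (hverts : P.verts = {x | x ∈ vs})
    (hedges₁ : ∀ q ∈ P.edges, ∃ i u w, vs[i]? = some u ∧ vs[i + 1]? = some w ∧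
      ((q.1 = u ∧ q.2.1 = w) ∨ (q.1 = w ∧ q.2.1 = u)))
    (hedges₂ : ∀ i u w, vs[i]? = some u → vs[i + 1]? = some w →
      ∃! q : V × V × SE, q ∈ P.edges ∧
        ((q.1 = u ∧ q.2.1 = w) ∨ (q.1 = w ∧ q.2.1 = u)))
    (hlab : P.labels = {lab}) (hlabpos : lab.1 ≠ lastv)
    (hL : P.labels.Finite) (hE : P.edges.Finite)
    (hsize : 2 ≤ P.toLabeledGraph.size) :
    P.ConnectedAfterRemove (Sum.inl lab) ∧
    (∀ q ∈ P.edges, (q.1 = lastv ∨ q.2.1 = lastv) →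
      P.ConnectedAfterRemove (Sum.inr q)) ∧
    P.Decomposable := by
    classical
  have hsomeE : ∀ {i : ℕ} {x : V}, vs[i]? = some x → ∃ h : i < vs.length, vs[i] = x :=
    fun h => List.getElem?_eq_some_iff.mp h
  have hinj : ∀ {i j : ℕ} (hi : i < vs.length) (hj : j < vs.length),
      vs[i]'hi = vs[j]'hj → i = j := fun _ _ h => (hnd.getElem_inj_iff).mp h
  have gcongr : ∀ {a b : ℕ} (h : a = b) (ha : a < vs.length) (hb : b < vs.length),
      vs[a]'ha = vs[b]'hb := by
    intro a b h ha hb; subst h; rfl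
  obtain ⟨hpos0, h0⟩ := hsomeE (by rw [← List.head?_eq_getElem?]; exact hhead)
  obtain ⟨hposl, hlv⟩ := hsomeE (by rw [← List.getLast?_eq_getElem?]; exact hlast)
  have hpair : ∀ i (h : i + 1 < vs.length), ∃ q ∈ P.edges,
      ((q.1 = vs[i]'(by omega) ∧ q.2.1 = vs[i+1]'h) ∨
       (q.1 = vs[i+1]'h ∧ q.2.1 = vs[i]'(by omega))) := by
    intro i h
    obtain ⟨q, hq, -⟩ := hedges₂ i (vs[i]'(by omega)) (vs[i+1]'h)
      (List.getElem?_eq_getElem (by omega)) (List.getElem?_eq_getElem h)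
    exact ⟨q, hq.1, hq.2⟩
  have hinc : ∀ q ∈ P.edges, ∀ x : V, (q.1 = x ∨ q.2.1 = x) →
      ∃ i, ∃ h : i + 1 < vs.length,
        (vs[i]'(by omega) = x ∨ vs[i+1]'h = x) ∧
        ((q.1 = vs[i]'(by omega) ∧ q.2.1 = vs[i+1]'h) ∨
         (q.1 = vs[i+1]'h ∧ q.2.1 = vs[i]'(by omega))) := by
    intro q hq x hx
    obtain ⟨i, u, w, hu, hw, hsp⟩ := hedges₁ q hq
    obtain ⟨hiw, hw'⟩ := hsomeE hw
    obtain ⟨hiu, hu'⟩ := hsomeE hu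
    subst hu'
    subst hw'
    refine ⟨i, hiw, ?_, hsp⟩
    rcases hx with hx | hx <;> rcases hsp with ⟨h1, h2⟩ | ⟨h1, h2⟩
    · exact Or.inl (h1 ▸ hx)
    · exact Or.inr (h1 ▸ hx)
    · exact Or.inr (h2 ▸ hx)
    · exact Or.inl (h2 ▸ hx)
  have hlastedge : ∀ q ∈ P.edges, (q.1 = lastv ∨ q.2.1 = lastv) →
      ((q.1 = vs[vs.length-2]'(by omega) ∧ q.2.1 = lastv) ∨
       (q.1 = lastv ∧ q.2.1 = vs[vs.length-2]'(by omega))) := by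
    intro q hq hx
    obtain ⟨i, h, hor, hsp⟩ := hinc q hq lastv hx
    rcases hor with he | he
    · exfalso
      have : i = vs.length - 1 := hinj (by omega) hposl (he.trans hlv.symm)
      omega
    · have hieq : i = vs.length - 2 := by
        have : i + 1 = vs.length - 1 := hinj h hposl (he.trans hlv.symm)
        omega
      subst hieq
      rw [he] at hsp
      exact hsp
  have huniq : ∀ q ∈ P.edges, (q.1 = lastv ∨ q.2.1 = lastv) →
      ∀ q' ∈ P.edges, (q'.1 = lastv ∨ q'.2.1 = lastv) → q = q' := by
    intro q hq hqx q' hq' hqx'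
    have hwlast : vs[vs.length - 2 + 1]? = some lastv := by
      rw [show vs.length - 2 + 1 = vs.length - 1 by omega,
        List.getElem?_eq_getElem hposl, hlv]
    have hu := hedges₂ (vs.length - 2) (vs[vs.length-2]'(by omega)) lastv
      (List.getElem?_eq_getElem (by omega)) hwlast
    exact hu.unique ⟨hq, hlastedge q hq hqx⟩ ⟨hq', hlastedge q' hq' hqx'⟩
  have occ_edge : ∀ (S : Set (V × V × SE)) (e : V × V × SE), e ∈ S → ∀ x : V,
      (e.1 = x ∨ e.2.1 = x) → ∃ u l, (x, u, l) ∈ S ∨ (u, x, l) ∈ S := by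
    intro S e he x hx
    rcases hx with h | h
    · exact ⟨e.2.1, e.2.2, Or.inl (by rw [← h]; exact he)⟩
    · exact ⟨e.1, e.2.2, Or.inr (by rw [← h]; exact he)⟩
  have hocc : ∀ x ∈ P.verts, LabeledGraph.Occupied P.labels P.edges x := by
    intro x hx
    rw [hverts] at hx
    obtain ⟨i, hi, hix⟩ := List.mem_iff_getElem.mp hx
    by_cases h : i + 1 < vs.length
    · obtain ⟨e, he, hsp⟩ := hpair i h
      refine Or.inr (occ_edge _ e he x ?_)
      rcases hsp with ⟨h1, _⟩ | ⟨_, h2⟩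
      · exact Or.inl (h1.trans hix)
      · exact Or.inr (h2.trans hix)
    · obtain ⟨e, he, hsp⟩ := hpair (vs.length - 2) (by omega)
      have hix' : vs[vs.length - 2 + 1]'(by omega) = x :=
        (gcongr (by omega) (by omega) hi).trans hix
      refine Or.inr (occ_edge _ e he x ?_)
      rcases hsp with ⟨_, h2⟩ | ⟨h1, _⟩
      · exact Or.inr (h2.trans hix')
      · exact Or.inl (h1.trans hix')
  have hlabmem : lab ∈ P.labels := by rw [hlab]; rfl
  have part1 : P.ConnectedAfterRemove (Sum.inl lab) := by
    constructor
    · refine ⟨P.pivot_mem, Or.inl (Or.inr ?_)⟩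
      obtain ⟨e, he, hsp⟩ := hpair 0 (by omega)
      have he' : e ∈ P.toLabeledGraph.delEdges (Sum.inl lab) := he
      refine occ_edge _ e he' P.pivot ?_
      rcases hsp with ⟨h1, _⟩ | ⟨_, h2⟩
      · exact Or.inl (h1.trans h0)
      · exact Or.inr (h2.trans h0)
    · intro x hx
      exact hconn x hx.1
  have part2 : ∀ q ∈ P.edges, (q.1 = lastv ∨ q.2.1 = lastv) →
      P.ConnectedAfterRemove (Sum.inr q) := by
    intro q hq hqx
    have hne : ∀ e ∈ P.edges, e.1 ≠ lastv → e.2.1 ≠ lastv → e ∈ P.edges \ {q} := by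
      intro e he h1 h2
      refine ⟨he, fun h => ?_⟩
      rw [Set.mem_singleton_iff] at h
      rcases hqx with hh | hh
      · exact h1 (by rw [h]; exact hh)
      · exact h2 (by rw [h]; exact hh)
    have hnot_lastv : ∀ i (hi : i < vs.length), i ≠ vs.length - 1 → vs[i]'hi ≠ lastv := by
      intro i hi hne' h
      exact hne' (hinj hi hposl (h.trans hlv.symm))
    have hsurv : ∀ k (hk : k + 1 < vs.length - 1),
        ∃ e ∈ P.edges \ {q},
          ((e.1 = vs[k]'(by omega) ∧ e.2.1 = vs[k+1]'(by omega)) ∨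
           (e.1 = vs[k+1]'(by omega) ∧ e.2.1 = vs[k]'(by omega))) := by
      intro k hk
      obtain ⟨e, he, hsp⟩ := hpair k (by omega)
      refine ⟨e, ?_, hsp⟩
      have h1 : vs[k]'(by omega) ≠ lastv := hnot_lastv k (by omega) (by omega)
      have h2 : vs[k+1]'(by omega) ≠ lastv := hnot_lastv (k+1) (by omega) (by omega)
      rcases hsp with ⟨a, b⟩ | ⟨a, b⟩
      · exact hne e he (by rw [a]; exact h1) (by rw [b]; exact h2)
      · exact hne e he (by rw [a]; exact h2) (by rw [b]; exact h1)
    have hocc' : ∀ i (h : i < vs.length - 1),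
        LabeledGraph.Occupied P.labels (P.edges \ {q}) (vs[i]'(by omega)) := by
      intro i h
      by_cases h1 : i + 1 < vs.length - 1
      · obtain ⟨e, hes, hsp⟩ := hsurv i h1
        refine Or.inr (occ_edge _ e hes _ ?_)
        rcases hsp with ⟨a, _⟩ | ⟨_, b⟩
        · exact Or.inl a
        · exact Or.inr b
      · by_cases h2 : 0 < i
        · obtain ⟨e, hes, hsp⟩ := hsurv (i-1) (by omega)
          have hidx : vs[i-1+1]'(by omega) = vs[i]'(by omega) :=
            gcongr (by omega) (by omega) (by omega)
          refine Or.inr (occ_edge _ e hes _ ?_)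
          rcases hsp with ⟨_, b⟩ | ⟨a, _⟩
          · exact Or.inr (b.trans hidx)
          · exact Or.inl (a.trans hidx)
        · have hi0 : i = 0 := by omega
          have hl1 : lab.1 ∈ P.verts := P.toLabeledGraph.labels_sub hlabmem
          rw [hverts] at hl1
          obtain ⟨j, hj, hjx⟩ := List.mem_iff_getElem.mp hl1
          have hj0 : j = 0 := by
            by_contra hj0
            have hj1 : j = vs.length - 1 := by omega
            apply hlabpos
            rw [← hjx]
            exact (gcongr hj1 hj hposl).trans hlv
          subst hi0
          refine Or.inl ⟨lab.2, ?_⟩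
          have : vs[(0:ℕ)]'(by omega) = lab.1 := by
            rw [← hjx]; exact gcongr hj0.symm (by omega) hj
          rw [this]
          exact hlabmem
    have hlast_not : ¬ LabeledGraph.Occupied P.labels (P.edges \ {q}) lastv := by
      rintro (⟨l, hl⟩ | ⟨u, l, hul⟩)
      · have hm : (lastv, l) ∈ ({lab} : Set (V × SV)) := hlab ▸ hl
        rw [Set.mem_singleton_iff] at hm
        exact hlabpos (congrArg Prod.fst hm).symm
      · rcases hul with h | h
        · exact h.2 (huniq q hq hqx (lastv, u, l) h.1 (Or.inl rfl)).symm
        · exact h.2 (huniq q hq hqx (u, lastv, l) h.1 (Or.inr rfl)).symm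
    constructor
    · refine ⟨P.pivot_mem, Or.inl ?_⟩
      have hpo := hocc' 0 (by omega)
      rw [h0] at hpo
      exact hpo
    · intro x hx
      obtain ⟨hxv, hx2⟩ := hx
      rcases hx2 with hoccx | hnoccx
      swap
      · exact absurd (hocc x hxv) hnoccx
      have hoccx' : LabeledGraph.Occupied P.labels (P.edges \ {q}) x := hoccx
      rw [hverts] at hxv
      obtain ⟨i, hi, rfl⟩ := List.mem_iff_getElem.mp hxv
      have hilt : i < vs.length - 1 := by
        by_contra hcon
        have hieq : i = vs.length - 1 := by omega
        refine hlast_not ?_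
        have := gcongr hieq hi hposl
        rw [this, hlv] at hoccx'
        exact hoccx'
      have chain : ∀ j, ∀ hj : j < vs.length - 1,
          Relation.ReflTransGen (P.toLabeledGraph.removeElement (Sum.inr q)).Adj
            (vs[j]'(by omega)) P.pivot := by
        intro j
        induction j with
        | zero =>
          intro hj
          rw [h0]
        | succ k ih =>
          intro hj
          have hadj : (P.toLabeledGraph.removeElement (Sum.inr q)).Adj
              (vs[k+1]'(by omega)) (vs[k]'(by omega)) := by
            obtain ⟨e, hes, hsp⟩ := hsurv k hj
            rcases hsp with ⟨a, b⟩ | ⟨a, b⟩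
            · exact ⟨e.2.2, Or.inr (by rw [← a, ← b]; exact hes)⟩
            · exact ⟨e.2.2, Or.inl (by rw [← a, ← b]; exact hes)⟩
          exact Relation.ReflTransGen.head hadj (ih (by omega))
      exact chain i hilt
  refine ⟨part1, part2, ?_⟩
  obtain ⟨e, he, hsp⟩ := hpair (vs.length - 2) (by omega)
  have hidx : vs[vs.length-2+1]'(by omega) = lastv :=
    (gcongr (by omega) (by omega) hposl).trans hlv
  have hinc_e : e.1 = lastv ∨ e.2.1 = lastv := by
    rcases hsp with ⟨_, b⟩ | ⟨a, _⟩
    · exact Or.inr (b.trans hidx)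
    · exact Or.inl (a.trans hidx)
  exact ⟨Sum.inl lab, Sum.inr e, by simp, hlabmem, he, part1, part2 e he hinc_e⟩
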